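/- Let L be a finite Galois extension of a field K with Galois group G, let H and H' be subgroups of G, and set E = L^{H'} and F = L^{H} (the fixed fields). Choose a complete set of representatives σ_1, …, σ_m ∈ G for the double cosets H'\G/H. Then the K-algebra homomorphism E ⊗_K F → ∏_{i=1}^m (E · σ_i(F)), given on pure tensors by x ⊗ y ↦ (x · σ_i(y))_{i=1,…,m}, where E · σ_i(F) denotes the compositum of E and σ_i(F) inside L, is an isomorphism of K-algebras. Moreover E · σ_i(F) equals the fixed field L^{H' ∩ σ_i H σ_i^{-1}}. -/

import Mathlib

set_option maxHeartbeats 1600000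

open TensorProduct IntermediateField
open scoped Pointwise

section Aux

variable {K L : Type*} [Field K] [Field L] [Algebra K L]

lemma aux_fixingSubgroup_sup (M N : IntermediateField K L) :
    fixingSubgroup (M ⊔ N) = fixingSubgroup M ⊓ fixingSubgroup N := by
  ext τ
  rw [Subgroup.mem_inf, ← Subgroup.zpowers_le, ← Subgroup.zpowers_le, ← Subgroup.zpowers_le,
    ← IntermediateField.le_iff_le, ← IntermediateField.le_iff_le, ← IntermediateField.le_iff_le,
    sup_le_iff]

lemma aux_conj_smul (σ : L ≃ₐ[K] L) (H : Subgroup (L ≃ₐ[K] L)) :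
    MulAut.conj σ • H = H.map (MulAut.conj σ).toMonoidHom := rfl

lemma aux_fixing_comp [FiniteDimensional K L] (H H' : Subgroup (L ≃ₐ[K] L)) (σ : L ≃ₐ[K] L) :
    fixingSubgroup ((fixedField H' : IntermediateField K L) ⊔
        (fixedField H).map σ.toAlgHom) = H' ⊓ H.map (MulAut.conj σ).toMonoidHom := by
  rw [aux_fixingSubgroup_sup, fixingSubgroup_fixedField]
  congr 1
  have := IsGalois.map_fixingSubgroup (fixedField H) σ
  rw [aux_conj_smul, fixingSubgroup_fixedField] at this
  convert this using 2

lemma aux_exists_algHom_of_ker_eq {K A B C : Type*} [CommSemiring K] [CommRing A] [CommRing B]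
    [CommRing C] [Algebra K A] [Algebra K B] [Algebra K C]
    (g₁ : A →ₐ[K] B) (g₂ : A →ₐ[K] C) (h₁ : Function.Surjective g₁)
    (hker : ∀ a, g₁ a = 0 ↔ g₂ a = 0) :
    ∃ φ : B →ₐ[K] C, ∀ a, φ (g₁ a) = g₂ a := by
  have hker : RingHom.ker g₁ = RingHom.ker g₂ := by
    ext a; simpa [RingHom.mem_ker] using hker a
  refine ⟨(Ideal.kerLiftAlg g₂).comp ((Ideal.quotientEquivAlgOfEq K hker).toAlgHom.comp
    (Ideal.quotientKerAlgEquivOfSurjective h₁).symm.toAlgHom), fun a => ?_⟩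
  have h1 : (Ideal.quotientKerAlgEquivOfSurjective h₁).symm (g₁ a)
      = Ideal.Quotient.mk (RingHom.ker g₁) a := by
    rw [AlgEquiv.symm_apply_eq]
    exact (Ideal.kerLiftAlg_mk g₁ a).symm
  simp only [AlgHom.coe_comp, Function.comp_apply, AlgEquiv.coe_algHom, h1,
    Ideal.quotientEquivAlgOfEq_mk]
  exact Ideal.kerLiftAlg_mk g₂ a

/-- The map `F → C`, `y ↦ σ y`, when `σ(F) ≤ C`. -/
def auxCompRight (F C : IntermediateField K L) (σ : L ≃ₐ[K] L)
    (h : F.map σ.toAlgHom ≤ C) : F →ₐ[K] C where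
  toFun y := ⟨σ (y : L), h ⟨y, y.2, rfl⟩⟩
  map_one' := Subtype.ext (by simp)
  map_mul' x y := Subtype.ext (by simp)
  map_zero' := Subtype.ext (by simp)
  map_add' x y := Subtype.ext (by simp)
  commutes' r := Subtype.ext (by simp [IntermediateField.algebraMap_apply])

lemma auxCompRight_val (F C : IntermediateField K L) (σ : L ≃ₐ[K] L)
    (h : F.map σ.toAlgHom ≤ C) :
    C.val.comp (auxCompRight F C σ h) = σ.toAlgHom.comp F.val := rfl

/-- The component map `E ⊗ F → E ⊔ σ(F)`. -/
noncomputable def auxG (E F : IntermediateField K L) (σ : L ≃ₐ[K] L) :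
    (E ⊗[K] F) →ₐ[K] (E ⊔ F.map σ.toAlgHom : IntermediateField K L) :=
  Algebra.TensorProduct.productMap
    (IntermediateField.inclusion le_sup_left)
    (auxCompRight F _ σ le_sup_right)

lemma auxG_tmul (E F : IntermediateField K L) (σ : L ≃ₐ[K] L) (x : E) (y : F) :
    (auxG E F σ (x ⊗ₜ[K] y) : L) = (x : L) * σ (y : L) := rfl

lemma auxG_surjective [FiniteDimensional K L] (E F : IntermediateField K L) (σ : L ≃ₐ[K] L) :
    Function.Surjective (auxG E F σ) := by
  set C : IntermediateField K L := E ⊔ F.map σ.toAlgHom with hC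
  have hrange : (C.val.comp (auxG E F σ)).range = C.toSubalgebra := by
    rw [AlgHom.range_comp, auxG, Algebra.TensorProduct.productMap_range]
    rw [Algebra.map_sup, ← AlgHom.range_comp, ← AlgHom.range_comp,
      auxCompRight_val]
    have h1 : C.val.comp (IntermediateField.inclusion (le_sup_left : E ≤ C)) = E.val := by
      ext x; rfl
    have h2 : (σ.toAlgHom.comp F.val).range = (F.map σ.toAlgHom).toSubalgebra := by
      rw [AlgHom.range_comp, IntermediateField.range_val]; rfl
    rw [h1, IntermediateField.range_val, h2, hC,
      IntermediateField.sup_toSubalgebra_of_left]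
  intro c
  have hc : (c : L) ∈ (C.val.comp (auxG E F σ)).range := by rw [hrange]; exact c.2
  obtain ⟨a, ha⟩ := hc
  exact ⟨a, Subtype.ext ha⟩

lemma aux_ker_ne [FiniteDimensional K L] [IsGalois K L]
    (H H' : Subgroup (L ≃ₐ[K] L)) (E F : IntermediateField K L)
    (hE : E = fixedField H') (hF : F = fixedField H)
    (σ₁ σ₂ : L ≃ₐ[K] L)
    (h : ∀ a, auxG E F σ₁ a = 0 ↔ auxG E F σ₂ a = 0) :
    DoubleCoset.mk H' H σ₁ = DoubleCoset.mk H' H σ₂ := by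
  obtain ⟨φ, hφ⟩ := aux_exists_algHom_of_ker_eq (K := K) (A := E ⊗[K] F)
    (B := (E ⊔ F.map σ₁.toAlgHom : IntermediateField K L))
    (C := (E ⊔ F.map σ₂.toAlgHom : IntermediateField K L)) (auxG E F σ₁) (auxG E F σ₂)
    (auxG_surjective E F σ₁) h
  set ψ : (E ⊔ F.map σ₁.toAlgHom : IntermediateField K L) →ₐ[K] L :=
    (E ⊔ F.map σ₂.toAlgHom : IntermediateField K L).val.comp φ with hψdef
  have hψ : ∀ a : E ⊗[K] F, ψ (auxG E F σ₁ a) = (auxG E F σ₂ a : L) := by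
    intro a
    simp only [hψdef, AlgHom.coe_comp, Function.comp_apply, hφ a]
    rfl
  set τ0 : L →ₐ[K] L := ψ.liftNormal L with hτ0
  have hτ0c : ∀ x : (E ⊔ F.map σ₁.toAlgHom : IntermediateField K L), τ0 (x : L) = ψ x := by
    intro x
    have := AlgHom.liftNormal_commutes ψ L x
    simpa using this
  set τ : L ≃ₐ[K] L := AlgEquiv.ofBijective τ0 (AlgHom.normal_bijective K L L τ0) with hτdef
  have hτ : ∀ x : (E ⊔ F.map σ₁.toAlgHom : IntermediateField K L), τ (x : L) = ψ x := hτ0c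
  have hτE : ∀ x : E, τ (x : L) = x := by
    intro x
    have h1 : ((auxG E F σ₁ (x ⊗ₜ[K] 1) : L)) = (x : L) := by
      rw [auxG_tmul]; simp
    have h2 : ((auxG E F σ₂ (x ⊗ₜ[K] 1) : L)) = (x : L) := by
      rw [auxG_tmul]; simp
    calc τ (x : L) = τ (auxG E F σ₁ (x ⊗ₜ[K] 1) : L) := by rw [h1]
    _ = ψ (auxG E F σ₁ (x ⊗ₜ[K] 1)) := hτ _
    _ = (auxG E F σ₂ (x ⊗ₜ[K] 1) : L) := hψ _
    _ = x := h2
  have hτF : ∀ y : F, τ (σ₁ (y : L)) = σ₂ (y : L) := by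
    intro y
    have h1 : ((auxG E F σ₁ ((1 : E) ⊗ₜ[K] y) : L)) = σ₁ (y : L) := by
      rw [auxG_tmul]; simp
    have h2 : ((auxG E F σ₂ ((1 : E) ⊗ₜ[K] y) : L)) = σ₂ (y : L) := by
      rw [auxG_tmul]; simp
    calc τ (σ₁ (y : L)) = τ (auxG E F σ₁ ((1:E) ⊗ₜ[K] y) : L) := by rw [h1]
    _ = ψ (auxG E F σ₁ ((1:E) ⊗ₜ[K] y)) := hτ _
    _ = (auxG E F σ₂ ((1:E) ⊗ₜ[K] y) : L) := hψ _
    _ = σ₂ (y : L) := h2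
  have hτH' : τ ∈ H' := by
    have : τ ∈ fixingSubgroup E := by
      rw [IntermediateField.mem_fixingSubgroup_iff]
      intro x hx; exact hτE ⟨x, hx⟩
    rwa [hE, fixingSubgroup_fixedField] at this
  have hkH : σ₁⁻¹ * τ⁻¹ * σ₂ ∈ H := by
    have : σ₁⁻¹ * τ⁻¹ * σ₂ ∈ fixingSubgroup F := by
      rw [IntermediateField.mem_fixingSubgroup_iff]
      intro y hy
      have h1 : τ⁻¹ (σ₂ y) = σ₁ y := by
        have := hτF ⟨y, hy⟩
        simp only at this
        rw [← this]
        exact (AlgEquiv.symm_apply_apply τ _)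
      show (σ₁⁻¹ * τ⁻¹ * σ₂) y = y
      rw [AlgEquiv.mul_apply, AlgEquiv.mul_apply, h1]
      exact σ₁.symm_apply_apply y
    rwa [hF, fixingSubgroup_fixedField] at this
  rw [DoubleCoset.eq]
  exact ⟨τ, hτH', σ₁⁻¹ * τ⁻¹ * σ₂, hkH, by group⟩

lemma aux_pi_surjective {K A : Type*} [CommRing A] [CommSemiring K] [Algebra K A]
    {m : ℕ} {B : Fin m → Type*} [∀ i, Field (B i)] [∀ i, Algebra K (B i)]
    (g : ∀ i, A →ₐ[K] B i) (hs : ∀ i, Function.Surjective (g i))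
    (hker0 : ∀ i j, i ≠ j → ¬ (∀ a, g i a = 0 ↔ g j a = 0)) :
    Function.Surjective (Pi.algHom K B g) := by
  have hker : ∀ i j, i ≠ j → RingHom.ker (g i) ≠ RingHom.ker (g j) := by
    intro i j hij hk
    exact hker0 i j hij fun a => by
      rw [← RingHom.mem_ker, ← RingHom.mem_ker, hk]
  intro z
  choose a ha using fun i => hs i (z i)
  have hmax : ∀ i, (RingHom.ker (g i)).IsMaximal :=
    fun i => RingHom.ker_isMaximal_of_surjective (g i) (hs i)
  have hco : Pairwise (Function.onFun IsCoprime fun i => RingHom.ker (g i)) :=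
    fun i j hij => (Ideal.isCoprime_iff_sup_eq).mpr
      (Ideal.IsMaximal.coprime_of_ne (hmax i) (hmax j) (hker i j hij))
  obtain ⟨q, hq⟩ := Ideal.quotientInfToPiQuotient_surj hco
    (fun i => Ideal.Quotient.mk _ (a i))
  obtain ⟨b, rfl⟩ := Ideal.Quotient.mk_surjective q
  refine ⟨b, funext fun i => ?_⟩
  have h1 : Ideal.Quotient.mk (RingHom.ker (g i)) b = Ideal.Quotient.mk _ (a i) := by
    rw [← Ideal.quotientInfToPiQuotient_mk']
    exact congrFun hq i
  have h2 : b - a i ∈ RingHom.ker (g i) := by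
    rwa [Ideal.Quotient.mk_eq_mk_iff_sub_mem] at h1
  rw [RingHom.mem_ker, map_sub, sub_eq_zero] at h2
  show g i b = z i
  rw [h2, ha i]

open MulAction in
lemma aux_group_count {G : Type*} [Group G] [Finite G] (H H' : Subgroup G)
    {m : ℕ} (σ : Fin m → G)
    (hσ : Function.Bijective fun i => DoubleCoset.mk H' H (σ i)) :
    ∃ o : Fin m → ℕ,
      (∀ i, o i * Nat.card (H' ⊓ H.map (MulAut.conj (σ i)).toMonoidHom : Subgroup G)
        = Nat.card H') ∧
      (∑ i, o i) * Nat.card H = Nat.card G := by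
  classical
  cases nonempty_fintype G
  set X := G ⧸ H with hX
  refine ⟨fun i => Nat.card (orbit H' ((σ i : G) : X)), fun i => ?_, ?_⟩
  · -- orbit-stabilizer
    have hos : Nat.card (orbit H' ((σ i : G) : X)) *
        Nat.card (stabilizer H' ((σ i : G) : X)) = Nat.card H' := by
      rw [Nat.card_eq_fintype_card, Nat.card_eq_fintype_card, Nat.card_eq_fintype_card]
      exact MulAction.card_orbit_mul_card_stabilizer_eq_card_group H' ((σ i : G) : X)
    have hstab : stabilizer H' ((σ i : G) : X)
        = (H.map (MulAut.conj (σ i)).toMonoidHom).subgroupOf H' := by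
      ext g
      simp only [MulAction.mem_stabilizer_iff, Subgroup.mem_subgroupOf, Subgroup.mem_map,
        MulAut.conj_apply, MulEquiv.coe_toMonoidHom]
      have hsm : (g • ((σ i : G) : X)) = (((g : G) * σ i : G) : X) := rfl
      rw [hsm, QuotientGroup.eq]
      constructor
      · intro h
        refine ⟨(σ i)⁻¹ * (g : G) * σ i, ?_, by group⟩
        have he : (σ i)⁻¹ * (g : G) * σ i = (((g : G) * σ i)⁻¹ * σ i)⁻¹ := by group
        rw [he]; exact inv_mem h
      · rintro ⟨x, hx, hgx⟩
        have he : ((g : G) * σ i)⁻¹ * σ i = ((σ i)⁻¹ * (g : G)⁻¹ * σ i) := by group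
        rw [he, ← hgx]
        have he2 : (σ i)⁻¹ * (σ i * x * (σ i)⁻¹)⁻¹ * σ i = x⁻¹ := by group
        rw [he2]; exact inv_mem hx
    have hcard : Nat.card (stabilizer H' ((σ i : G) : X))
        = Nat.card (H' ⊓ H.map (MulAut.conj (σ i)).toMonoidHom : Subgroup G) := by
      rw [hstab, inf_comm, ← Subgroup.inf_subgroupOf_right]
      exact Nat.card_congr (Subgroup.subgroupOfEquivOfLe inf_le_right).toEquiv
    rw [← hcard]; exact hos
  · -- sum of orbit sizes
    have e0 : Function.Bijective (fun i : Fin m =>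
        (Quotient.mk'' ((σ i : G) : X) : orbitRel.Quotient H' X)) := by
      constructor
      · intro i j hij
        apply hσ.injective
        rw [Quotient.eq''] at hij
        have hij' : ((σ i : G) : X) ∈ orbit H' ((σ j : G) : X) := hij
        obtain ⟨g, hg⟩ := hij'
        have hg' : (((g : G) * σ j : G) : X) = ((σ i : G) : X) := hg
        rw [QuotientGroup.eq] at hg'
        simp only
        rw [DoubleCoset.eq]
        refine ⟨(g : G)⁻¹, inv_mem g.2, (((g : G) * σ j)⁻¹ * σ i)⁻¹, inv_mem hg', by group⟩
      · intro ω
        obtain ⟨x, rfl⟩ := Quotient.exists_rep ω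
        obtain ⟨g, rfl⟩ := QuotientGroup.mk_surjective x
        obtain ⟨i, hi⟩ := hσ.surjective (DoubleCoset.mk H' H g)
        refine ⟨i, ?_⟩
        simp only at hi
        rw [DoubleCoset.eq] at hi
        obtain ⟨h', hh', k, hk, hgk⟩ := hi
        apply Quotient.sound'
        have hmem : ((σ i : G) : X) ∈ orbit H' ((g : G) : X) := by
          refine ⟨⟨h'⁻¹, inv_mem hh'⟩, ?_⟩
          show ((⟨h'⁻¹, inv_mem hh'⟩ : H') • ((g : G) : X)) = ((σ i : G) : X)
          have hsm2 : ((⟨h'⁻¹, inv_mem hh'⟩ : H') • ((g : G) : X)) = ((h'⁻¹ * g : G) : X) := rfl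
          rw [hsm2, QuotientGroup.eq, hgk]
          have he : (h'⁻¹ * (h' * σ i * k))⁻¹ * σ i = k⁻¹ := by group
          rw [he]; exact inv_mem hk
        exact hmem
    have horb : ∀ i : Fin m,
        orbitRel.Quotient.orbit (Quotient.mk'' ((σ i : G) : X) : orbitRel.Quotient H' X)
          = orbit H' ((σ i : G) : X) := fun i => orbitRel.Quotient.orbit_mk _
    have e3 : (Σ i : Fin m, orbit H' ((σ i : G) : X)) ≃
        (Σ ω : orbitRel.Quotient H' X, ω.orbit) :=
      Equiv.sigmaCongr (Equiv.ofBijective _ e0) (fun i => Equiv.setCongr (horb i).symm)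
    have h1 : Nat.card X = ∑ i, Nat.card (orbit H' ((σ i : G) : X)) := by
      rw [Nat.card_congr ((MulAction.selfEquivSigmaOrbits' H' X).trans e3.symm),
        Nat.card_eq_fintype_card, Fintype.card_sigma]
      exact Finset.sum_congr rfl fun i _ => (Nat.card_eq_fintype_card).symm
    rw [← h1]
    exact (Subgroup.card_eq_card_quotient_mul_card_subgroup H).symm
end Aux

/-- Let `L/K` be a finite Galois extension with Galois group `G`, let `H, H'` be
subgroups of `G`, and set `E = L^{H'}`, `F = L^{H}`. If `σ 0, …, σ (m-1)` is a complete
set of representatives for the double cosets `H'\G/H`, then the `K`-algebra homomorphism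
`E ⊗[K] F → ∏ i, E·(σ i)(F)`, `x ⊗ y ↦ (x * σ i y)_i`, into the product of the composita
`E·(σ i)(F) ⊆ L`, is an isomorphism of `K`-algebras. Moreover `E·(σ i)(F)` equals the
fixed field `L^{H' ∩ σ i H (σ i)⁻¹}`. -/
theorem stmt_3 (K L : Type*) [Field K] [Field L] [Algebra K L]
    [FiniteDimensional K L] [IsGalois K L]
    (H H' : Subgroup (L ≃ₐ[K] L))
    (E F : IntermediateField K L)
    (hE : E = IntermediateField.fixedField H') (hF : F = IntermediateField.fixedField H)
    (m : ℕ) (σ : Fin m → (L ≃ₐ[K] L))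
    (hσ : Function.Bijective fun i => DoubleCoset.mk H' H (σ i)) :
    (∃ f : (E ⊗[K] F) →ₐ[K] (∀ i : Fin m, (E ⊔ F.map (σ i).toAlgHom : IntermediateField K L)),
      (∀ (x : E) (y : F) (i : Fin m), (f (x ⊗ₜ[K] y) i : L) = (x : L) * σ i (y : L)) ∧
      Function.Bijective f) ∧
    ∀ i : Fin m,
      (E ⊔ F.map (σ i).toAlgHom : IntermediateField K L) =
        IntermediateField.fixedField (H' ⊓ H.map (MulAut.conj (σ i)).toMonoidHom) := by
  classical
  have hpart2 : ∀ i : Fin m,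
      (E ⊔ F.map (σ i).toAlgHom : IntermediateField K L) =
        IntermediateField.fixedField (H' ⊓ H.map (MulAut.conj (σ i)).toMonoidHom) := by
    intro i
    rw [hE, hF, ← aux_fixing_comp H H' (σ i), IsGalois.fixedField_fixingSubgroup]
  refine ⟨?_, hpart2⟩
  set g : ∀ i : Fin m, (E ⊗[K] F) →ₐ[K] (E ⊔ F.map (σ i).toAlgHom : IntermediateField K L) :=
    fun i => auxG E F (σ i) with hgdef
  have hsurj : ∀ i, Function.Surjective (g i) := fun i => auxG_surjective E F (σ i)
  have hne : ∀ i j : Fin m, i ≠ j → ¬ (∀ a, g i a = 0 ↔ g j a = 0) := by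
    intro i j hij h
    exact hij (hσ.injective (aux_ker_ne H H' E F hE hF (σ i) (σ j) h))
  have hsurjf := aux_pi_surjective (K := K) (A := E ⊗[K] F)
    (B := fun i => (E ⊔ F.map (σ i).toAlgHom : IntermediateField K L)) g hsurj hne
  -- dimension count
  obtain ⟨o, ho1, ho2⟩ := aux_group_count H H' σ hσ
  set n := Module.finrank K L with hn
  have hGcard : Nat.card (L ≃ₐ[K] L) = n := by
    rw [IsGalois.card_aut_eq_finrank]
  have hsub : ∀ N : Subgroup (L ≃ₐ[K] L),
      Module.finrank K (fixedField N) * Nat.card N = n := by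
    intro N
    rw [← IntermediateField.finrank_fixedField_eq_card N]
    exact Module.finrank_mul_finrank K (fixedField N) L
  have h2 : Module.finrank K E * Nat.card H' = n := by rw [hE]; exact hsub H'
  have h3 : Module.finrank K F * Nat.card H = n := by rw [hF]; exact hsub H
  have h1 : ∀ i : Fin m,
      Module.finrank K (E ⊔ F.map (σ i).toAlgHom : IntermediateField K L) *
        Nat.card (H' ⊓ H.map (MulAut.conj (σ i)).toMonoidHom : Subgroup (L ≃ₐ[K] L)) = n := by
    intro i
    rw [hpart2 i]
    exact hsub _
  rw [hGcard] at ho2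
  have hapos : 0 < Nat.card H' := Nat.card_pos
  have hbpos : 0 < Nat.card H := Nat.card_pos
  have key : Module.finrank K E * Module.finrank K F
      = ∑ i, Module.finrank K (E ⊔ F.map (σ i).toAlgHom : IntermediateField K L) := by
    apply Nat.eq_of_mul_eq_mul_right (Nat.mul_pos hapos hbpos)
    calc Module.finrank K E * Module.finrank K F * (Nat.card H' * Nat.card H)
        = (Module.finrank K E * Nat.card H') * (Module.finrank K F * Nat.card H) := by ring
      _ = n * n := by rw [h2, h3]
      _ = n * ((∑ i, o i) * Nat.card H) := by rw [ho2]
      _ = ∑ i, n * o i * Nat.card H := by simp only [Finset.sum_mul, Finset.mul_sum, mul_assoc]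
      _ = ∑ i, Module.finrank K (E ⊔ F.map (σ i).toAlgHom : IntermediateField K L) *
            (Nat.card H' * Nat.card H) := by
          refine Finset.sum_congr rfl fun i _ => ?_
          rw [← ho1 i, ← h1 i]; ring
      _ = (∑ i, Module.finrank K (E ⊔ F.map (σ i).toAlgHom : IntermediateField K L)) *
            (Nat.card H' * Nat.card H) := by rw [Finset.sum_mul]
  have hrank : Module.finrank K (E ⊗[K] F)
      = Module.finrank K (∀ i : Fin m, (E ⊔ F.map (σ i).toAlgHom : IntermediateField K L)) := by
    rw [Module.finrank_tensorProduct, Module.finrank_pi_fintype, key]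
  have hinj : Function.Injective (Pi.algHom K
      (fun i => (E ⊔ F.map (σ i).toAlgHom : IntermediateField K L)) g) := by
    have hl := (LinearMap.injective_iff_surjective_of_finrank_eq_finrank (K := K)
      (f := (Pi.algHom K (fun i => (E ⊔ F.map (σ i).toAlgHom : IntermediateField K L))
        g).toLinearMap) hrank)
    have : Function.Surjective ((Pi.algHom K
        (fun i => (E ⊔ F.map (σ i).toAlgHom : IntermediateField K L)) g).toLinearMap) := hsurjf
    exact hl.mpr this
  exact ⟨Pi.algHom K (fun i => (E ⊔ F.map (σ i).toAlgHom : IntermediateField K L)) g,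
    fun x y i => auxG_tmul E F (σ i) x y, hinj, hsurjf⟩
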